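/- Call a two-qubit state ρ Bell-diagonal if its Bloch matrix R has the block form R = [[1, 0ᵀ],[0, T]] for some 3×3 real matrix T (i.e. both local Bloch vectors vanish). If ρ^{AB} and ρ^{CD} are Bell-diagonal with correlation matrices T and S, and the POVM element E^{BC} has coefficient matrix 𝔯 = [[A₁, 0ᵀ],[0, U]] with A₁ ≠ 0, then the post-swapping state ρ^{AD} is Bell-diagonal with Bloch matrix [[1, 0ᵀ],[0, (1/A₁)TUS]]. -/

import Mathlib

open Matrix Kronecker ComplexOrder

/-- Pauli matrices, with `σ 0 = I`. -/
noncomputable def σ : Fin 4 → Matrix (Fin 2) (Fin 2) ℂ :=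
  ![1, !![0, 1; 1, 0], !![0, -Complex.I; Complex.I, 0], !![1, 0; 0, -1]]

/-- Partial trace over the middle two qubits B and C, with tensor ordering A⊗B⊗C⊗D. -/
noncomputable def trBC
    (X : Matrix (Fin 2 × Fin 2 × Fin 2 × Fin 2) (Fin 2 × Fin 2 × Fin 2 × Fin 2) ℂ) :
    Matrix (Fin 2 × Fin 2) (Fin 2 × Fin 2) ℂ :=
  Matrix.of fun p q => ∑ b : Fin 2, ∑ c : Fin 2, X (p.1, b, c, p.2) (q.1, b, c, q.2)

/-- The four-qubit operator ρ^{AB} ⊗ ρ^{CD}. -/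
noncomputable def stateABCD (ρAB ρCD : Matrix (Fin 2 × Fin 2) (Fin 2 × Fin 2) ℂ) :
    Matrix (Fin 2 × Fin 2 × Fin 2 × Fin 2) (Fin 2 × Fin 2 × Fin 2 × Fin 2) ℂ :=
  Matrix.of fun x y =>
    ρAB (x.1, x.2.1) (y.1, y.2.1) * ρCD (x.2.2.1, x.2.2.2) (y.2.2.1, y.2.2.2)

/-- The four-qubit operator 𝟙^A ⊗ E^{BC} ⊗ 𝟙^D. -/
noncomputable def opBC (E : Matrix (Fin 2 × Fin 2) (Fin 2 × Fin 2) ℂ) :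
    Matrix (Fin 2 × Fin 2 × Fin 2 × Fin 2) (Fin 2 × Fin 2 × Fin 2 × Fin 2) ℂ :=
  Matrix.of fun x y =>
    (if x.1 = y.1 then 1 else 0) * E (x.2.1, x.2.2.1) (y.2.1, y.2.2.1) *
      (if x.2.2.2 = y.2.2.2 then 1 else 0)


/-- The singlet ket (1/√2)(|01⟩ − |10⟩). -/
noncomputable def singletKet : Fin 2 × Fin 2 → ℂ :=
  fun p => if p = (0, 1) then (Real.sqrt 2)⁻¹ else if p = (1, 0) then -(Real.sqrt 2)⁻¹ else 0

/-- The singlet projector Φ⁻ = |Φ⁻⟩⟨Φ⁻|. -/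
noncomputable def singlet : Matrix (Fin 2 × Fin 2) (Fin 2 × Fin 2) ℂ :=
  Matrix.of fun p q => singletKet p * star (singletKet q)

/-- The Bell states Φ_n = (𝟙 ⊗ σ_n) Φ⁻ (𝟙 ⊗ σ_n). -/
noncomputable def bell (n : Fin 4) : Matrix (Fin 2 × Fin 2) (Fin 2 × Fin 2) ℂ :=
  ((1 : Matrix (Fin 2) (Fin 2) ℂ) ⊗ₖ σ n) * singlet * ((1 : Matrix (Fin 2) (Fin 2) ℂ) ⊗ₖ σ n)

lemma factor (ρAB ρCD : Matrix (Fin 2 × Fin 2) (Fin 2 × Fin 2) ℂ)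
    (F G P Q : Matrix (Fin 2) (Fin 2) ℂ) :
    (trBC (stateABCD ρAB ρCD * opBC (F ⊗ₖ G)) * (P ⊗ₖ Q)).trace
      = (ρAB * (P ⊗ₖ F)).trace * (ρCD * (G ⊗ₖ Q)).trace := by
  simp only [Matrix.trace, Matrix.diag, Matrix.mul_apply, trBC, stateABCD, opBC,
    Matrix.kroneckerMap_apply, Matrix.of_apply, Fintype.sum_prod_type, Fin.sum_univ_two,
    Finset.sum_mul, Finset.mul_sum]
  norm_num
  ring

lemma σ_eq : σ = ![!![1,0;0,1], !![0,1;1,0], !![0,-Complex.I;Complex.I,0], !![1,0;0,-1]] := by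
  funext n; fin_cases n <;> simp [σ] <;> exact Matrix.one_fin_two

set_option maxHeartbeats 1000000 in
lemma Eexp (E : Matrix (Fin 2 × Fin 2) (Fin 2 × Fin 2) ℂ) :
    E = ∑ k : Fin 4, ∑ l : Fin 4,
        ((1/4 : ℂ) * (E * (σ k ⊗ₖ σ l)).trace) • (σ k ⊗ₖ σ l) := by
  ext ⟨a, b⟩ ⟨c, d⟩
  fin_cases a <;> fin_cases b <;> fin_cases c <;> fin_cases d <;>
  · simp only [Matrix.sum_apply, Matrix.smul_apply, Fin.sum_univ_four, Matrix.trace,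
      Matrix.diag, Matrix.mul_apply, Matrix.kroneckerMap_apply, Fintype.sum_prod_type,
      Fin.sum_univ_two, smul_eq_mul, σ_eq, Matrix.cons_val_zero, Matrix.cons_val_one,
      Matrix.head_cons, Matrix.of_apply, Matrix.cons_val', Matrix.empty_val',
      Matrix.cons_val_fin_one, Matrix.head_fin_const, Matrix.cons_val]
    norm_num
    try ring_nf
    try simp only [Complex.I_sq]
    try ring

lemma opBC_sum {ι : Type*} (s : Finset ι)
    (f : ι → Matrix (Fin 2 × Fin 2) (Fin 2 × Fin 2) ℂ) :
    opBC (∑ x ∈ s, f x) = ∑ x ∈ s, opBC (f x) := by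
  ext a b
  simp [opBC, Matrix.sum_apply, Finset.sum_mul, Finset.mul_sum]

lemma opBC_smul (c : ℂ) (A : Matrix (Fin 2 × Fin 2) (Fin 2 × Fin 2) ℂ) :
    opBC (c • A) = c • opBC A := by
  ext a b
  simp [opBC, Matrix.smul_apply]
  try ring

lemma trBC_sum {ι : Type*} (s : Finset ι)
    (f : ι → Matrix (Fin 2 × Fin 2 × Fin 2 × Fin 2) (Fin 2 × Fin 2 × Fin 2 × Fin 2) ℂ) :
    trBC (∑ x ∈ s, f x) = ∑ x ∈ s, trBC (f x) := by
  ext a b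
  simp [trBC, Matrix.sum_apply, Fin.sum_univ_two, Finset.sum_add_distrib]

lemma trBC_smul (c : ℂ)
    (A : Matrix (Fin 2 × Fin 2 × Fin 2 × Fin 2) (Fin 2 × Fin 2 × Fin 2 × Fin 2) ℂ) :
    trBC (c • A) = c • trBC A := by
  ext a b
  simp [trBC, Matrix.smul_apply, Finset.mul_sum]
  ring
set_option maxHeartbeats 1000000 in
theorem stmt11 (ρAB ρCD E : Matrix (Fin 2 × Fin 2) (Fin 2 × Fin 2) ℂ)
    (hAB : ρAB.PosSemidef) (hABtr : ρAB.trace = 1)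
    (hCD : ρCD.PosSemidef) (hCDtr : ρCD.trace = 1)
    (hE : E.PosSemidef)
    (RAB RCD rBC : Matrix (Fin 4) (Fin 4) ℂ)
    (hRAB : ∀ i j, RAB i j = (ρAB * (σ i ⊗ₖ σ j)).trace)
    (hRCD : ∀ i j, RCD i j = (ρCD * (σ i ⊗ₖ σ j)).trace)
    (hr : ∀ k l, rBC k l = (1/4 : ℂ) * (E * (σ k ⊗ₖ σ l)).trace)
    -- ρ^{AB}, ρ^{CD} Bell-diagonal: vanishing local Bloch vectors
    (hABbd : ∀ j : Fin 4, j ≠ 0 → RAB 0 j = 0 ∧ RAB j 0 = 0)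
    (hCDbd : ∀ j : Fin 4, j ≠ 0 → RCD 0 j = 0 ∧ RCD j 0 = 0)
    -- E^{BC} Bell-diagonal with (0,0)-coefficient A₁ ≠ 0
    (hrbd : ∀ j : Fin 4, j ≠ 0 → rBC 0 j = 0 ∧ rBC j 0 = 0)
    (A₁ : ℂ) (hA₁ : A₁ = rBC 0 0) (hA₁0 : A₁ ≠ 0)
    -- normalized post-swapping state
    (p : ℂ) (hp : p = (trBC (stateABCD ρAB ρCD * opBC E)).trace)
    (ρAD : Matrix (Fin 2 × Fin 2) (Fin 2 × Fin 2) ℂ)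
    (hρAD : ρAD = p⁻¹ • trBC (stateABCD ρAB ρCD * opBC E))
    (RAD : Matrix (Fin 4) (Fin 4) ℂ)
    (hRAD : ∀ i j, RAD i j = (ρAD * (σ i ⊗ₖ σ j)).trace) :
    RAD 0 0 = 1 ∧ (∀ j : Fin 4, j ≠ 0 → RAD 0 j = 0 ∧ RAD j 0 = 0) ∧
      ∀ i j : Fin 3, RAD i.succ j.succ =
        ((Matrix.of fun a b : Fin 3 => RAB a.succ b.succ) *
         (Matrix.of fun a b : Fin 3 => rBC a.succ b.succ) *
         (Matrix.of fun a b : Fin 3 => RCD a.succ b.succ)) i j / A₁ := by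
  have hσ00 : σ 0 ⊗ₖ σ 0 = (1 : Matrix (Fin 2 × Fin 2) (Fin 2 × Fin 2) ℂ) := by
    have : σ 0 = 1 := by simp [σ]
    rw [this, Matrix.one_kronecker_one]
  have hM : ∀ i j : Fin 4, (trBC (stateABCD ρAB ρCD * opBC E) * (σ i ⊗ₖ σ j)).trace
      = ∑ k : Fin 4, ∑ l : Fin 4, RAB i k * rBC k l * RCD l j := by
    intro i j
    conv_lhs => rw [Eexp E]
    simp only [opBC_sum, opBC_smul, Matrix.mul_sum, Matrix.mul_smul, trBC_sum, trBC_smul,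
      Matrix.sum_mul, Matrix.smul_mul, Matrix.trace_sum, Matrix.trace_smul, smul_eq_mul]
    refine Finset.sum_congr rfl fun k _ => Finset.sum_congr rfl fun l _ => ?_
    rw [factor, hRAB, hRCD, hr]
    ring
  have h1 : RAB 0 0 = 1 := by rw [hRAB, hσ00, mul_one, hABtr]
  have h2 : RCD 0 0 = 1 := by rw [hRCD, hσ00, mul_one, hCDtr]
  have a01 : RAB 0 1 = 0 := (hABbd 1 (by decide)).1
  have a02 : RAB 0 2 = 0 := (hABbd 2 (by decide)).1
  have a03 : RAB 0 3 = 0 := (hABbd 3 (by decide)).1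
  have c10 : RCD 1 0 = 0 := (hCDbd 1 (by decide)).2
  have c20 : RCD 2 0 = 0 := (hCDbd 2 (by decide)).2
  have c30 : RCD 3 0 = 0 := (hCDbd 3 (by decide)).2
  have r01 : rBC 0 1 = 0 := (hrbd 1 (by decide)).1
  have r02 : rBC 0 2 = 0 := (hrbd 2 (by decide)).1
  have r03 : rBC 0 3 = 0 := (hrbd 3 (by decide)).1
  have r10 : rBC 1 0 = 0 := (hrbd 1 (by decide)).2
  have r20 : rBC 2 0 = 0 := (hrbd 2 (by decide)).2
  have r30 : rBC 3 0 = 0 := (hrbd 3 (by decide)).2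
  have hp' : p = A₁ := by
    rw [hp, ← mul_one (trBC (stateABCD ρAB ρCD * opBC E)), ← hσ00, hM 0 0]
    simp [Fin.sum_univ_four, a01, a02, a03, c10, c20, c30, r01, r02, r03, r10, r20, r30,
      h1, h2, ← hA₁]
  have hRAD' : ∀ i j, RAD i j = A₁⁻¹ * ∑ k : Fin 4, ∑ l : Fin 4, RAB i k * rBC k l * RCD l j := by
    intro i j
    rw [hRAD, hρAD, Matrix.smul_mul, Matrix.trace_smul, smul_eq_mul, hM i j, hp']
  refine ⟨?_, ?_, ?_⟩
  · rw [hRAD' 0 0]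
    simp only [Fin.sum_univ_four, a01, a02, a03, c10, c20, c30, r01, r02, r03, r10, r20, r30,
      h1, h2, mul_zero, zero_mul, add_zero, zero_add, mul_one, one_mul, ← hA₁]
    exact inv_mul_cancel₀ hA₁0
  · intro j hj
    constructor
    · rw [hRAD' 0 j]
      simp [Fin.sum_univ_four, a01, a02, a03, r01, r02, r03, r10, r20, r30, (hCDbd j hj).1]
    · rw [hRAD' j 0]
      simp [Fin.sum_univ_four, c10, c20, c30, r01, r02, r03, r10, r20, r30, (hABbd j hj).2]
  · intro i j
    have cj : RCD 0 j.succ = 0 := (hCDbd j.succ (Fin.succ_ne_zero j)).1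
    have s0 : (0 : Fin 3).succ = (1 : Fin 4) := rfl
    have s1 : (1 : Fin 3).succ = (2 : Fin 4) := rfl
    have s2 : (2 : Fin 3).succ = (3 : Fin 4) := rfl
    rw [hRAD' i.succ j.succ]
    simp only [Matrix.mul_apply, Matrix.of_apply, Fin.sum_univ_three, Fin.sum_univ_four,
      Finset.sum_mul, s0, s1, s2, cj, r01, r02, r03, r10, r20, r30,
      mul_zero, zero_mul, add_zero, zero_add]
    rw [div_eq_mul_inv]
    ring
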